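/- Let π : A → B be a surjective quasi-isomorphism of cdgas and let Q be the pullback of B ⊗ (t,dt) → B ← A along ev₁ ⊗ id and π. Then the map A ⊗ (t,dt) → Q induced by π ⊗ id_{(t,dt)} and id ⊗ ev₁ is a surjective quasi-isomorphism. -/

import Mathlib

/-! STATEMENT 16: Let `π : A → B` be a surjective quasi-isomorphism of cdgas and let `Q`
be the pullback of `B ⊗ (t,dt) → B ← A` along `ev₁ ⊗ id` and `π`, i.e.
`Q = {(h,a) : (h,a) ∈ (B ⊗ (t,dt)) × A, (id ⊗ ev₁)(h) = π(a)}`.  Then the map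
`A ⊗ (t,dt) → Q`, `ω ↦ ((π ⊗ id)(ω), (id ⊗ ev₁)(ω))`, is a surjective quasi-isomorphism.

`A ⊗ (t,dt)` is modelled concretely as pairs `(P(t), Q(t))` of polynomials with
coefficients in `A` (representing `P(t) + Q(t)·dt`), with the Koszul-signed multiplication
and differential expressed through the sign operator `ε = (−1)^{deg}` (given as data with
its defining property).  Quasi-isomorphisms are expressed elementwise. -/

structure CDGA where
  carrier : Type
  [ring : Ring carrier]
  [alg : Algebra ℚ carrier]
  grading : ℕ → Submodule ℚ carrier
  isInternal : DirectSum.IsInternal grading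
  one_mem : (1 : carrier) ∈ grading 0
  mul_mem : ∀ {i j : ℕ} {a b : carrier}, a ∈ grading i → b ∈ grading j → a * b ∈ grading (i + j)
  gcomm : ∀ {i j : ℕ} {a b : carrier}, a ∈ grading i → b ∈ grading j →
    a * b = ((-1 : ℚ) ^ (i * j)) • (b * a)
  d : carrier →ₗ[ℚ] carrier
  d_mem : ∀ {i : ℕ} {a : carrier}, a ∈ grading i → d a ∈ grading (i + 1)
  d_sq : ∀ a, d (d a) = 0
  leibniz : ∀ {i : ℕ} (a b : carrier), a ∈ grading i →
    d (a * b) = d a * b + ((-1 : ℚ) ^ i) • (a * d b)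

attribute [instance] CDGA.ring CDGA.alg

structure CDGAHom (A B : CDGA) where
  toFun : A.carrier →ₐ[ℚ] B.carrier
  grading_mem : ∀ {n : ℕ} {x : A.carrier}, x ∈ A.grading n → toFun x ∈ B.grading n
  comm_d : ∀ x, toFun (A.d x) = B.d (toFun x)

/-- applying a map to the coefficients of a polynomial. -/
noncomputable def pmapH {R S : Type} [Ring R] [Ring S] (f : R → S) (h : f 0 = 0)
    (p : Polynomial R) : Polynomial S := ⟨AddMonoidAlgebra.ofCoeff (Finsupp.mapRange f h p.toFinsupp.coeff)⟩

abbrev ATc (A : CDGA) : Type := Polynomial A.carrier × Polynomial A.carrier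

noncomputable def atMul (A : CDGA) (ε : A.carrier →ₗ[ℚ] A.carrier) (x y : ATc A) : ATc A :=
  (x.1 * y.1, x.1 * y.2 + x.2 * pmapH ε (map_zero ε) y.1)

noncomputable def atD (A : CDGA) (ε : A.carrier →ₗ[ℚ] A.carrier) (x : ATc A) : ATc A :=
  (pmapH A.d (map_zero A.d) x.1,
   pmapH ε (map_zero ε) (Polynomial.derivative x.1) + pmapH A.d (map_zero A.d) x.2)

def atDeg (A : CDGA) (n : ℕ) (x : ATc A) : Prop :=
  (∀ k, x.1.coeff k ∈ A.grading n) ∧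
  (match n with
   | 0 => x.2 = 0
   | (m + 1) => ∀ k, x.2.coeff k ∈ A.grading m)

/-- the evaluation `id ⊗ ev₁ : A ⊗ (t,dt) → A`, `t ↦ 1`, `dt ↦ 0`. -/
noncomputable def ev1 (A : CDGA) (x : ATc A) : A.carrier := x.1.eval 1

/-- elementwise quasi-isomorphism of cdgas. -/
def IsQuasiIso (A B : CDGA) (f : CDGAHom A B) : Prop :=
  (∀ b ∈ B.grading 0, B.d b = 0 → ∃ a ∈ A.grading 0, A.d a = 0 ∧ f.toFun a = b) ∧
  (∀ a ∈ A.grading 0, A.d a = 0 → f.toFun a = 0 → a = 0) ∧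
  (∀ n : ℕ, ∀ b ∈ B.grading (n + 1), B.d b = 0 →
    ∃ a ∈ A.grading (n + 1), A.d a = 0 ∧ ∃ b' ∈ B.grading n, f.toFun a - b = B.d b') ∧
  (∀ n : ℕ, ∀ a ∈ A.grading (n + 1), A.d a = 0 →
    (∃ b' ∈ B.grading n, f.toFun a = B.d b') → ∃ a' ∈ A.grading n, A.d a' = a)

/-- the pullback `Q` of `B ⊗ (t,dt) → B ← A`. -/
noncomputable def Qset (A B : CDGA) (π : CDGAHom A B) : Set (ATc B × A.carrier) :=
  {z | ev1 B z.1 = π.toFun z.2}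

/-- the differential of `Q`. -/
noncomputable def dQ (A B : CDGA) (εB : B.carrier →ₗ[ℚ] B.carrier)
    (z : ATc B × A.carrier) : ATc B × A.carrier :=
  (atD B εB z.1, A.d z.2)

/-- the degree-`n` part of `Q`. -/
def QDeg (A B : CDGA) (n : ℕ) (z : ATc B × A.carrier) : Prop :=
  atDeg B n z.1 ∧ z.2 ∈ A.grading n

/-- the multiplication of `(B ⊗ (t,dt)) × A`. -/
noncomputable def qmul (A B : CDGA) (εB : B.carrier →ₗ[ℚ] B.carrier)
    (z z' : ATc B × A.carrier) : ATc B × A.carrier :=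
  (atMul B εB z.1 z'.1, z.2 * z'.2)

/-- the comparison map `A ⊗ (t,dt) → (B ⊗ (t,dt)) × A`,
`ω ↦ ((π ⊗ id)(ω), (id ⊗ ev₁)(ω))`. -/
noncomputable def Phi (A B : CDGA) (π : CDGAHom A B) (ω : ATc A) : ATc B × A.carrier :=
  ((pmapH π.toFun (map_zero π.toFun) ω.1, pmapH π.toFun (map_zero π.toFun) ω.2), ev1 A ω)

section Helpers

open Polynomial

variable {R S : Type} [Ring R] [Ring S]

lemma coeff_pmapH (f : R → S) (h : f 0 = 0) (p : R[X]) (k : ℕ) :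
    (pmapH f h p).coeff k = f (p.coeff k) := rfl

lemma pmapH_zero (f : R → S) (h : f 0 = 0) : pmapH f h (0 : R[X]) = 0 := by
  ext k; simp [coeff_pmapH, h]

lemma pmapH_C (f : R → S) (h : f 0 = 0) (x : R) : pmapH f h (C x) = C (f x) := by
  ext k
  rw [coeff_pmapH, coeff_C, coeff_C]
  split <;> simp [h]

variable {F : Type} [FunLike F R S]

lemma pmapH_add [AddMonoidHomClass F R S] (f : F) (h : (⇑f) 0 = 0) (p q : R[X]) :
    pmapH ⇑f h (p + q) = pmapH ⇑f h p + pmapH ⇑f h q := by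
  ext k; simp [coeff_pmapH]

lemma pmapH_neg [AddMonoidHomClass F R S] (f : F) (h : (⇑f) 0 = 0) (p : R[X]) :
    pmapH ⇑f h (-p) = - pmapH ⇑f h p := by
  ext k; simp [coeff_pmapH]

lemma pmapH_eq_map (f : R →+* S) (g : R → S) (h : g 0 = 0) (hg : ∀ x, g x = f x) (p : R[X]) :
    pmapH g h p = p.map f := by
  ext k; rw [coeff_pmapH, coeff_map, hg]

lemma eval_one_pmapH [AddMonoidHomClass F R S] (f : F) (h : (⇑f) 0 = 0) (p : R[X]) :
    (pmapH ⇑f h p).eval 1 = f (p.eval 1) := by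
  have hle : (pmapH ⇑f h p).natDegree ≤ p.natDegree := by
    rw [Polynomial.natDegree_le_iff_coeff_eq_zero]
    intro N hN
    rw [coeff_pmapH, Polynomial.coeff_eq_zero_of_natDegree_lt hN, map_zero]
  rw [Polynomial.eval_eq_sum_range' (Nat.lt_succ_of_le hle) 1,
    Polynomial.eval_eq_sum_range' (Nat.lt_succ_self _) 1, map_sum]
  simp [coeff_pmapH]

lemma eval_one_mul (p q : R[X]) : (p * q).eval 1 = p.eval 1 * q.eval 1 :=
  Polynomial.eval₂_mul_noncomm _ _ fun _ => Commute.one_right _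

lemma eval_one_mem [Module ℚ R] {M : Submodule ℚ R} {p : R[X]} (h : ∀ k, p.coeff k ∈ M) :
    p.eval 1 ∈ M := by
  rw [Polynomial.eval_eq_sum_range]
  exact Submodule.sum_mem _ fun i _ => by simpa using h i

lemma mul_nat_succ [Module ℚ R] (a : R) (k : ℕ) :
    a * ((k : R) + 1) = (((k : ℚ)) + 1) • a := by
  have h1 : ((k : R) + 1) = ((k + 1 : ℕ) : R) := by norm_cast
  rw [h1, ← nsmul_eq_mul', ← Nat.cast_smul_eq_nsmul ℚ (k + 1) a]
  norm_num

/-- the formal integral `∫₀ᵗ`, with `coeff 0 = 0` and `coeff (k+1) = (k+1)⁻¹ • p.coeff k`. -/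
noncomputable def intH [Module ℚ R] (p : R[X]) : R[X] :=
  ⟨AddMonoidAlgebra.ofCoeff (Finsupp.onFinset (p.support.map ⟨Nat.succ, Nat.succ_injective⟩)
    (fun n => Nat.rec (motive := fun _ => R) (0 : R) (fun k _ => ((k : ℚ) + 1)⁻¹ • p.coeff k) n)
    (by
      intro n hn
      cases n with
      | zero => simp at hn
      | succ k =>
        simp only [Finset.mem_map, Function.Embedding.coeFn_mk]
        refine ⟨k, ?_, rfl⟩
        rw [Polynomial.mem_support_iff]
        intro h0
        exact hn (by simp [h0])))⟩

lemma intH_coeff_zero [Module ℚ R] (p : R[X]) : (intH p).coeff 0 = 0 := rfl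

lemma intH_coeff_succ [Module ℚ R] (p : R[X]) (k : ℕ) :
    (intH p).coeff (k + 1) = ((k : ℚ) + 1)⁻¹ • p.coeff k := rfl

lemma derivative_pmapH [Module ℚ R] [Module ℚ S] [LinearMapClass F ℚ R S]
    (f : F) (h : (⇑f) 0 = 0) (p : R[X]) :
    Polynomial.derivative (pmapH ⇑f h p) = pmapH ⇑f h (Polynomial.derivative p) := by
  ext k
  rw [coeff_pmapH, Polynomial.coeff_derivative, Polynomial.coeff_derivative, coeff_pmapH,
    mul_nat_succ, mul_nat_succ, map_smul]

end Helpers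
section CDGALemmas

open Polynomial

lemma smul_one_aux {R : Type} [Ring R] [Module ℚ R] {c : ℚ} (x : R) (hc : c = 1) :
    c • x = x := by rw [hc, one_smul]

lemma mapEps (A B : CDGA) (εA : A.carrier →ₗ[ℚ] A.carrier)
    (hεA : ∀ (n : ℕ) (a : A.carrier), a ∈ A.grading n → εA a = ((-1 : ℚ) ^ n) • a)
    (εB : B.carrier →ₗ[ℚ] B.carrier)
    (hεB : ∀ (n : ℕ) (b : B.carrier), b ∈ B.grading n → εB b = ((-1 : ℚ) ^ n) • b)
    (π : CDGAHom A B) (x : A.carrier) : π.toFun (εA x) = εB (π.toFun x) := by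
  have hx : x ∈ ⨆ i, A.grading i := by
    rw [A.isInternal.submodule_iSup_eq_top]; exact Submodule.mem_top
  refine Submodule.iSup_induction (motive := fun y => π.toFun (εA y) = εB (π.toFun y))
    A.grading hx (fun i a ha => ?_) (by simp) (fun a b h1 h2 => ?_)
  · show π.toFun (εA a) = εB (π.toFun a)
    rw [hεA i a ha, map_smul, hεB i _ (π.grading_mem ha)]
  · show π.toFun (εA (a + b)) = εB (π.toFun (a + b))
    have h1' : π.toFun (εA a) = εB (π.toFun a) := h1
    have h2' : π.toFun (εA b) = εB (π.toFun b) := h2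
    simp only [map_add, h1', h2']

set_option maxHeartbeats 1000000 in
set_option synthInstance.maxHeartbeats 1000000 in
lemma homog_surj (A B : CDGA) (π : CDGAHom A B) (hs : Function.Surjective π.toFun)
    (n : ℕ) (b : B.carrier) (hb : b ∈ B.grading n) :
    ∃ a ∈ A.grading n, π.toFun a = b := by
  letI iA := A.isInternal.chooseDecomposition
  letI iB := B.isInternal.chooseDecomposition
  obtain ⟨a, ha⟩ := hs b
  refine ⟨(DirectSum.decompose A.grading a n : A.carrier), Submodule.coe_mem _, ?_⟩
  have key : ∀ x : A.carrier,
      π.toFun ((DirectSum.decompose A.grading x n : A.carrier)) =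
      (DirectSum.decompose B.grading (π.toFun x) n : B.carrier) := by
    intro x
    have hx : x ∈ ⨆ i, A.grading i := by
      rw [A.isInternal.submodule_iSup_eq_top]; exact Submodule.mem_top
    refine Submodule.iSup_induction (motive := fun y =>
        π.toFun ((DirectSum.decompose A.grading y n : A.carrier)) =
        (DirectSum.decompose B.grading (π.toFun y) n : B.carrier))
      A.grading hx (fun i z hz => ?_) (by simp) (fun y z h1 h2 => ?_)
    · show π.toFun ((DirectSum.decompose A.grading z n : A.carrier)) =
        (DirectSum.decompose B.grading (π.toFun z) n : B.carrier)
      by_cases hin : i = n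
      · subst hin
        rw [DirectSum.decompose_of_mem_same _ hz,
          DirectSum.decompose_of_mem_same _ (π.grading_mem hz)]
      · rw [DirectSum.decompose_of_mem_ne _ hz hin,
          DirectSum.decompose_of_mem_ne _ (π.grading_mem hz) hin, map_zero]
    · show π.toFun ((DirectSum.decompose A.grading (y + z) n : A.carrier)) =
        (DirectSum.decompose B.grading (π.toFun (y + z)) n : B.carrier)
      have h1' : π.toFun ((DirectSum.decompose A.grading y n : A.carrier)) =
        (DirectSum.decompose B.grading (π.toFun y) n : B.carrier) := h1
      have h2' : π.toFun ((DirectSum.decompose A.grading z n : A.carrier)) =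
        (DirectSum.decompose B.grading (π.toFun z) n : B.carrier) := h2
      simp only [map_add, DirectSum.decompose_add, DirectSum.add_apply,
        Submodule.coe_add, h1', h2']
  rw [key, ha, DirectSum.decompose_of_mem_same _ hb]

lemma core_lemma (Cg : CDGA) (ε : Cg.carrier →ₗ[ℚ] Cg.carrier)
    (hε : ∀ (n : ℕ) (a : Cg.carrier), a ∈ Cg.grading n → ε a = ((-1 : ℚ) ^ n) • a)
    (n : ℕ) (P Q : Polynomial Cg.carrier)
    (hP : ∀ k, P.coeff k ∈ Cg.grading (n + 1)) (hQ : ∀ k, Q.coeff k ∈ Cg.grading n)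
    (hcoc : pmapH ε (map_zero ε) (Polynomial.derivative P) +
      pmapH Cg.d (map_zero Cg.d) Q = 0) :
    ∃ S : Polynomial Cg.carrier, (∀ k, S.coeff k ∈ Cg.grading n) ∧ S.coeff 0 = 0 ∧
      pmapH ε (map_zero ε) (Polynomial.derivative S) = Q ∧
      pmapH Cg.d (map_zero Cg.d) S = P - Polynomial.C (P.coeff 0) := by
  have hu : ((-1 : ℚ) ^ n) * ((-1 : ℚ) ^ n) = 1 := by
    rw [← pow_add]; exact Even.neg_one_pow ⟨n, rfl⟩
  set S : Polynomial Cg.carrier :=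
    pmapH (fun x => ((-1 : ℚ) ^ n) • x) (smul_zero _) (intH Q) with hS
  have hS0 : S.coeff 0 = 0 := by
    rw [hS, coeff_pmapH, intH_coeff_zero, smul_zero]
  have hSsucc : ∀ k, S.coeff (k + 1) = ((-1 : ℚ) ^ n) • ((k : ℚ) + 1)⁻¹ • Q.coeff k := by
    intro k; rw [hS, coeff_pmapH, intH_coeff_succ]
  have hSmem : ∀ k, S.coeff k ∈ Cg.grading n := by
    intro k
    cases k with
    | zero => rw [hS0]; exact Submodule.zero_mem _
    | succ k => rw [hSsucc]; exact Submodule.smul_mem _ _ (Submodule.smul_mem _ _ (hQ k))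
  have hk0 : ∀ k : ℕ, ((k : ℚ) + 1) ≠ 0 := fun k => by positivity
  refine ⟨S, hSmem, hS0, ?_, ?_⟩
  · ext k
    rw [coeff_pmapH, Polynomial.coeff_derivative, mul_nat_succ, map_smul,
      hε n _ (hSmem (k + 1)), hSsucc, smul_smul, smul_smul, smul_smul]
    refine smul_one_aux _ ?_
    field_simp
    linear_combination hu
  · have hdQ : ∀ k, Cg.d (Q.coeff k) =
        (-(((k : ℚ) + 1) * ((-1 : ℚ) ^ (n + 1)))) • P.coeff (k + 1) := by
      intro k
      have := congrArg (fun r => r.coeff k) hcoc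
      simp only [Polynomial.coeff_add, coeff_pmapH, Polynomial.coeff_zero] at this
      rw [Polynomial.coeff_derivative, mul_nat_succ, map_smul,
        hε (n + 1) _ (hP (k + 1)), smul_smul] at this
      exact (eq_neg_of_add_eq_zero_right this).trans (neg_smul _ _).symm
    ext k
    cases k with
    | zero =>
      rw [coeff_pmapH, hS0, map_zero, Polynomial.coeff_sub, Polynomial.coeff_C]
      simp
    | succ k =>
      rw [coeff_pmapH, hSsucc, map_smul, map_smul, hdQ, smul_smul, smul_smul,
        Polynomial.coeff_sub, Polynomial.coeff_C, if_neg (Nat.succ_ne_zero k), sub_zero]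
      refine smul_one_aux _ ?_
      rw [pow_succ]
      field_simp
      linear_combination hu

end CDGALemmas
lemma deg0_const (Cg : CDGA) (ε : Cg.carrier →ₗ[ℚ] Cg.carrier)
    (hε : ∀ (n : ℕ) (a : Cg.carrier), a ∈ Cg.grading n → ε a = ((-1 : ℚ) ^ n) • a)
    (P : Polynomial Cg.carrier) (hPdeg : ∀ k, P.coeff k ∈ Cg.grading 0)
    (h : pmapH ⇑ε (map_zero ε) (Polynomial.derivative P) = 0) :
    P = Polynomial.C (P.coeff 0) := by
  have hder : ∀ k, P.coeff (k + 1) = 0 := by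
    intro k
    have hc := congrArg (fun q => q.coeff k) h
    simp only [coeff_pmapH, Polynomial.coeff_zero] at hc
    rw [Polynomial.coeff_derivative, mul_nat_succ, map_smul,
      hε 0 _ (hPdeg (k + 1)), pow_zero, one_smul] at hc
    have hk0 : ((k : ℚ) + 1) ≠ 0 := by positivity
    calc P.coeff (k + 1) = ((k : ℚ) + 1)⁻¹ • (((k : ℚ) + 1) • P.coeff (k + 1)) :=
          (inv_smul_smul₀ hk0 _).symm
      _ = 0 := by rw [hc, smul_zero]
  ext k
  cases k with
  | zero => simp
  | succ k => rw [hder k, Polynomial.coeff_C, if_neg (Nat.succ_ne_zero k)]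

set_option maxHeartbeats 1000000 in
theorem stmt_16 (A B : CDGA)
    (εA : A.carrier →ₗ[ℚ] A.carrier)
    (hεA : ∀ (n : ℕ) (a : A.carrier), a ∈ A.grading n → εA a = ((-1 : ℚ) ^ n) • a)
    (εB : B.carrier →ₗ[ℚ] B.carrier)
    (hεB : ∀ (n : ℕ) (b : B.carrier), b ∈ B.grading n → εB b = ((-1 : ℚ) ^ n) • b)
    (π : CDGAHom A B) (hπsurj : Function.Surjective π.toFun)
    (hπqis : IsQuasiIso A B π) :
    -- `Φ` is a morphism of cdgas into the pullback `Q` …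
    (∀ ω : ATc A, Phi A B π ω ∈ Qset A B π) ∧
    (Phi A B π (1, 0) = ((1, 0), 1)) ∧
    (∀ ω ω' : ATc A, Phi A B π (ω + ω') = Phi A B π ω + Phi A B π ω') ∧
    (∀ ω ω' : ATc A,
      Phi A B π (atMul A εA ω ω') = qmul A B εB (Phi A B π ω) (Phi A B π ω')) ∧
    (∀ ω : ATc A, Phi A B π (atD A εA ω) = dQ A B εB (Phi A B π ω)) ∧
    -- … it is surjective onto `Q` …
    (∀ z ∈ Qset A B π, ∃ ω : ATc A, Phi A B π ω = z) ∧
    -- … and it is a quasi-isomorphism onto `Q` (elementwise, in each degree):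
    (∀ z ∈ Qset A B π, QDeg A B 0 z → dQ A B εB z = 0 →
      ∃ ω : ATc A, atDeg A 0 ω ∧ atD A εA ω = 0 ∧ Phi A B π ω = z) ∧
    (∀ ω : ATc A, atDeg A 0 ω → atD A εA ω = 0 → Phi A B π ω = 0 → ω = 0) ∧
    (∀ n : ℕ, ∀ z ∈ Qset A B π, QDeg A B (n + 1) z → dQ A B εB z = 0 →
      ∃ ω : ATc A, atDeg A (n + 1) ω ∧ atD A εA ω = 0 ∧
        ∃ w ∈ Qset A B π, QDeg A B n w ∧ Phi A B π ω - z = dQ A B εB w) ∧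
    (∀ n : ℕ, ∀ ω : ATc A, atDeg A (n + 1) ω → atD A εA ω = 0 →
      (∃ w ∈ Qset A B π, QDeg A B n w ∧ Phi A B π ω = dQ A B εB w) →
      ∃ ω' : ATc A, atDeg A n ω' ∧ atD A εA ω' = ω) := by
  have hπε : ∀ x, π.toFun (εA x) = εB (π.toFun x) := mapEps A B εA hεA εB hεB π
  have hmap : ∀ p : Polynomial A.carrier,
      pmapH ⇑π.toFun (map_zero π.toFun) p = p.map π.toFun.toRingHom :=
    fun p => pmapH_eq_map _ _ _ (fun _ => rfl) p
  have hcomm : ∀ p : Polynomial A.carrier,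
      pmapH ⇑π.toFun (map_zero π.toFun) (pmapH ⇑εA (map_zero εA) p) =
      pmapH ⇑εB (map_zero εB) (pmapH ⇑π.toFun (map_zero π.toFun) p) := by
    intro p; ext k; simp [coeff_pmapH, hπε]
  have hcommd : ∀ p : Polynomial A.carrier,
      pmapH ⇑π.toFun (map_zero π.toFun) (pmapH ⇑A.d (map_zero A.d) p) =
      pmapH ⇑B.d (map_zero B.d) (pmapH ⇑π.toFun (map_zero π.toFun) p) := by
    intro p; ext k; simp [coeff_pmapH, π.comm_d]
  refine ⟨?_, ?_, ?_, ?_, ?_, ?_, ?_, ?_, ?_, ?_⟩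
  · -- (1) lands in Qset
    intro ω
    exact (eval_one_pmapH π.toFun (map_zero π.toFun) ω.1 :
      ev1 B (Phi A B π ω).1 = π.toFun (Phi A B π ω).2)
  · -- (2) unit
    refine Prod.ext (Prod.ext ?_ ?_) ?_
    · show pmapH ⇑π.toFun (map_zero π.toFun) 1 = 1
      rw [hmap, Polynomial.map_one]
    · show pmapH ⇑π.toFun (map_zero π.toFun) 0 = 0
      exact pmapH_zero _ _
    · show ev1 A (1, 0) = 1
      simp [ev1]
  · -- (3) additive
    intro ω ω'
    have e1 : (ω + ω').1 = ω.1 + ω'.1 := rfl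
    have e2 : (ω + ω').2 = ω.2 + ω'.2 := rfl
    refine Prod.ext (Prod.ext ?_ ?_) ?_
    · show pmapH ⇑π.toFun (map_zero π.toFun) (ω + ω').1 =
        pmapH ⇑π.toFun (map_zero π.toFun) ω.1 + pmapH ⇑π.toFun (map_zero π.toFun) ω'.1
      rw [e1, pmapH_add]
    · show pmapH ⇑π.toFun (map_zero π.toFun) (ω + ω').2 =
        pmapH ⇑π.toFun (map_zero π.toFun) ω.2 + pmapH ⇑π.toFun (map_zero π.toFun) ω'.2
      rw [e2, pmapH_add]
    · show ev1 A (ω + ω') = ev1 A ω + ev1 A ω'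
      show (ω + ω').1.eval 1 = ω.1.eval 1 + ω'.1.eval 1
      rw [e1, Polynomial.eval_add]
  · -- (4) multiplicative
    intro ω ω'
    have hcomm' : ∀ p : Polynomial A.carrier,
        (pmapH ⇑εA (map_zero εA) p).map π.toFun.toRingHom =
        pmapH ⇑εB (map_zero εB) (p.map π.toFun.toRingHom) := by
      intro p; rw [← hmap, ← hmap, hcomm]
    refine Prod.ext (Prod.ext ?_ ?_) ?_
    · show pmapH ⇑π.toFun (map_zero π.toFun) (ω.1 * ω'.1) =
        pmapH ⇑π.toFun (map_zero π.toFun) ω.1 * pmapH ⇑π.toFun (map_zero π.toFun) ω'.1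
      simp only [hmap, Polynomial.map_mul]
    · show pmapH ⇑π.toFun (map_zero π.toFun)
          (ω.1 * ω'.2 + ω.2 * pmapH ⇑εA (map_zero εA) ω'.1) =
        pmapH ⇑π.toFun (map_zero π.toFun) ω.1 * pmapH ⇑π.toFun (map_zero π.toFun) ω'.2 +
        pmapH ⇑π.toFun (map_zero π.toFun) ω.2 *
          pmapH ⇑εB (map_zero εB) (pmapH ⇑π.toFun (map_zero π.toFun) ω'.1)
      simp only [hmap, Polynomial.map_add, Polynomial.map_mul, hcomm']
    · show ev1 A (atMul A εA ω ω') = ev1 A ω * ev1 A ω'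
      show (ω.1 * ω'.1).eval 1 = ω.1.eval 1 * ω'.1.eval 1
      exact eval_one_mul _ _
  · -- (5) commutes with d
    intro ω
    refine Prod.ext (Prod.ext ?_ ?_) ?_
    · show pmapH ⇑π.toFun (map_zero π.toFun) (pmapH ⇑A.d (map_zero A.d) ω.1) =
        pmapH ⇑B.d (map_zero B.d) (pmapH ⇑π.toFun (map_zero π.toFun) ω.1)
      exact hcommd ω.1
    · show pmapH ⇑π.toFun (map_zero π.toFun)
          (pmapH ⇑εA (map_zero εA) (Polynomial.derivative ω.1) +
            pmapH ⇑A.d (map_zero A.d) ω.2) =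
        pmapH ⇑εB (map_zero εB)
          (Polynomial.derivative (pmapH ⇑π.toFun (map_zero π.toFun) ω.1)) +
        pmapH ⇑B.d (map_zero B.d) (pmapH ⇑π.toFun (map_zero π.toFun) ω.2)
      rw [pmapH_add, hcomm, hcommd, derivative_pmapH]
    · show ev1 A (atD A εA ω) = A.d (ev1 A ω)
      show (pmapH ⇑A.d (map_zero A.d) ω.1).eval 1 = A.d (ω.1.eval 1)
      exact eval_one_pmapH A.d _ _
  · -- (6) surjective onto Q
    rintro ⟨⟨P, Q⟩, a⟩ hz
    have hz' : P.eval 1 = π.toFun a := hz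
    obtain ⟨P₀, hP₀⟩ := Polynomial.map_surjective π.toFun.toRingHom hπsurj P
    obtain ⟨Q₀, hQ₀⟩ := Polynomial.map_surjective π.toFun.toRingHom hπsurj Q
    have hπc : π.toFun (a - P₀.eval 1) = 0 := by
      have hπe : π.toFun (P₀.eval 1) = P.eval 1 := by
        rw [show π.toFun (P₀.eval 1) = π.toFun.toRingHom (P₀.eval 1) from rfl,
          ← Polynomial.eval_one_map, hP₀]
      rw [map_sub, hπe, hz', sub_self]
    refine ⟨(P₀ + Polynomial.C (a - P₀.eval 1), Q₀), ?_⟩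
    refine Prod.ext (Prod.ext ?_ ?_) ?_
    · show pmapH ⇑π.toFun (map_zero π.toFun) (P₀ + Polynomial.C (a - P₀.eval 1)) = P
      have hπc2 : π.toFun.toRingHom (a - P₀.eval 1) = 0 := hπc
      rw [hmap, Polynomial.map_add, hP₀, Polynomial.map_C, hπc2, Polynomial.C_0, add_zero]
    · show pmapH ⇑π.toFun (map_zero π.toFun) Q₀ = Q
      rw [hmap, hQ₀]
    · show (P₀ + Polynomial.C (a - P₀.eval 1)).eval 1 = a
      rw [Polynomial.eval_add, Polynomial.eval_C, add_sub_cancel]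
  · -- (7) degree-0 surjectivity on cocycles
    rintro ⟨⟨P, Qp⟩, a⟩ hz hdeg hd
    have hz' : P.eval 1 = π.toFun a := hz
    obtain ⟨⟨hPdeg, hQ0⟩, hadeg⟩ := hdeg
    have hQ0' : Qp = 0 := hQ0
    have hd2 : pmapH ⇑εB (map_zero εB) (Polynomial.derivative P) +
        pmapH ⇑B.d (map_zero B.d) Qp = 0 := congrArg (fun z => z.1.2) hd
    have hd3 : A.d a = 0 := congrArg (fun z => z.2) hd
    rw [hQ0', pmapH_zero, add_zero] at hd2
    have hPC : P = Polynomial.C (P.coeff 0) := deg0_const B εB hεB P hPdeg hd2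
    have hP0a : P.coeff 0 = π.toFun a := by
      rw [hPC, Polynomial.eval_C] at hz'; exact hz'
    refine ⟨(Polynomial.C a, 0), ⟨?_, rfl⟩, ?_, ?_⟩
    · intro k
      rw [Polynomial.coeff_C]
      split
      · exact hadeg
      · exact Submodule.zero_mem _
    · refine Prod.ext ?_ ?_
      · show pmapH ⇑A.d (map_zero A.d) (Polynomial.C a) = 0
        rw [pmapH_C, hd3, Polynomial.C_0]
      · show pmapH ⇑εA (map_zero εA) (Polynomial.derivative (Polynomial.C a)) +
          pmapH ⇑A.d (map_zero A.d) 0 = 0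
        rw [Polynomial.derivative_C, pmapH_zero, pmapH_zero, add_zero]
    · refine Prod.ext (Prod.ext ?_ ?_) ?_
      · show pmapH ⇑π.toFun (map_zero π.toFun) (Polynomial.C a) = P
        rw [pmapH_C, ← hP0a, ← hPC]
      · show pmapH ⇑π.toFun (map_zero π.toFun) 0 = Qp
        rw [pmapH_zero, hQ0']
      · show (Polynomial.C a).eval 1 = a
        exact Polynomial.eval_C
  · -- (8) degree-0 injectivity
    rintro ⟨P, Qp⟩ hdeg hdz hphi
    obtain ⟨hPdeg, hQ0⟩ := hdeg
    have hQ0' : Qp = 0 := hQ0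
    have hd2 : pmapH ⇑εA (map_zero εA) (Polynomial.derivative P) +
        pmapH ⇑A.d (map_zero A.d) Qp = 0 := congrArg Prod.snd hdz
    rw [hQ0', pmapH_zero, add_zero] at hd2
    have hPC : P = Polynomial.C (P.coeff 0) := deg0_const A εA hεA P hPdeg hd2
    have h3 : P.eval 1 = 0 := congrArg (fun z => z.2) hphi
    rw [hPC, Polynomial.eval_C] at h3
    refine Prod.ext ?_ ?_
    · show P = 0
      rw [hPC, h3, Polynomial.C_0]
    · exact hQ0'
  · -- (9) surjectivity on cohomology in positive degrees
    rintro n ⟨⟨P, Qp⟩, a⟩ hz hdeg hd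
    have hz' : P.eval 1 = π.toFun a := hz
    obtain ⟨⟨hPdeg, hQdeg'⟩, hadeg⟩ := hdeg
    have hQdeg : ∀ k, Qp.coeff k ∈ B.grading n := hQdeg'
    have hd2 : pmapH ⇑εB (map_zero εB) (Polynomial.derivative P) +
        pmapH ⇑B.d (map_zero B.d) Qp = 0 := congrArg (fun z => z.1.2) hd
    have hd3 : A.d a = 0 := congrArg (fun z => z.2) hd
    obtain ⟨S, hSmem, hS0, hSder, hSd⟩ := core_lemma B εB hεB n P Qp hPdeg hQdeg hd2
    obtain ⟨c, hcmem, hπc⟩ := homog_surj A B π hπsurj n ((-S).eval 1)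
      (eval_one_mem fun k => by
        rw [Polynomial.coeff_neg]; exact Submodule.neg_mem _ (hSmem k))
    have hev : B.d (S.eval 1) = π.toFun a - P.coeff 0 := by
      have h1 : (pmapH ⇑B.d (map_zero B.d) S).eval 1 = B.d (S.eval 1) :=
        eval_one_pmapH B.d _ S
      rw [hSd, Polynomial.eval_sub, Polynomial.eval_C, hz'] at h1
      exact h1.symm
    refine ⟨(Polynomial.C (a + A.d c), 0), ⟨?_, ?_⟩, ?_, ((-S, 0), c), ?_,
      ⟨⟨?_, ?_⟩, hcmem⟩, ?_⟩
    · intro k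
      rw [Polynomial.coeff_C]
      split
      · exact Submodule.add_mem _ hadeg (A.d_mem hcmem)
      · exact Submodule.zero_mem _
    · intro k
      rw [Polynomial.coeff_zero]
      exact Submodule.zero_mem _
    · refine Prod.ext ?_ ?_
      · show pmapH ⇑A.d (map_zero A.d) (Polynomial.C (a + A.d c)) = 0
        rw [pmapH_C, map_add, hd3, A.d_sq, add_zero, Polynomial.C_0]
      · show pmapH ⇑εA (map_zero εA)
            (Polynomial.derivative (Polynomial.C (a + A.d c))) +
          pmapH ⇑A.d (map_zero A.d) 0 = 0
        rw [Polynomial.derivative_C, pmapH_zero, pmapH_zero, add_zero]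
    · exact hπc.symm
    · intro k
      rw [Polynomial.coeff_neg]
      exact Submodule.neg_mem _ (hSmem k)
    · cases n with
      | zero => rfl
      | succ m =>
        intro k
        rw [Polynomial.coeff_zero]
        exact Submodule.zero_mem _
    · refine Prod.ext (Prod.ext ?_ ?_) ?_
      · show pmapH ⇑π.toFun (map_zero π.toFun) (Polynomial.C (a + A.d c)) - P =
          pmapH ⇑B.d (map_zero B.d) (-S)
        have hπc' : π.toFun c = -(S.eval 1) := by
          rw [hπc, Polynomial.eval_neg]
        rw [pmapH_C, map_add, π.comm_d, hπc', map_neg, hev, pmapH_neg, hSd,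
          show π.toFun a + -(π.toFun a - P.coeff 0) = P.coeff 0 from by abel, neg_sub]
      · show pmapH ⇑π.toFun (map_zero π.toFun) 0 - Qp =
          pmapH ⇑εB (map_zero εB) (Polynomial.derivative (-S)) +
          pmapH ⇑B.d (map_zero B.d) 0
        rw [pmapH_zero, pmapH_zero, Polynomial.derivative_neg, pmapH_neg, hSder,
          zero_sub, add_zero]
      · show (Polynomial.C (a + A.d c)).eval 1 - a = A.d c
        rw [Polynomial.eval_C, add_sub_cancel_left]
  · -- (10) injectivity on cohomology in positive degrees
    rintro n ⟨P, Qp⟩ hdeg hdz ⟨w, hwQ, hwdeg, hweq⟩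
    obtain ⟨hPdeg, hQdeg'⟩ := hdeg
    have hQdeg : ∀ k, Qp.coeff k ∈ A.grading n := hQdeg'
    have hd2 : pmapH ⇑εA (map_zero εA) (Polynomial.derivative P) +
        pmapH ⇑A.d (map_zero A.d) Qp = 0 := congrArg Prod.snd hdz
    have h3 : P.eval 1 = A.d w.2 := congrArg (fun z => z.2) hweq
    obtain ⟨S, hSmem, hS0, hSder, hSd⟩ := core_lemma A εA hεA n P Qp hPdeg hQdeg hd2
    have hcw : w.2 ∈ A.grading n := hwdeg.2
    have hev : A.d (S.eval 1) = P.eval 1 - P.coeff 0 := by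
      have h1 : (pmapH ⇑A.d (map_zero A.d) S).eval 1 = A.d (S.eval 1) :=
        eval_one_pmapH A.d _ S
      rw [hSd, Polynomial.eval_sub, Polynomial.eval_C] at h1
      exact h1.symm
    refine ⟨(S + Polynomial.C (w.2 - S.eval 1), 0), ⟨?_, ?_⟩, ?_⟩
    · intro k
      rw [Polynomial.coeff_add, Polynomial.coeff_C]
      refine Submodule.add_mem _ (hSmem k) ?_
      split
      · exact Submodule.sub_mem _ hcw (eval_one_mem hSmem)
      · exact Submodule.zero_mem _
    · cases n with
      | zero => rfl
      | succ m =>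
        intro k
        rw [Polynomial.coeff_zero]
        exact Submodule.zero_mem _
    · refine Prod.ext ?_ ?_
      · show pmapH ⇑A.d (map_zero A.d) (S + Polynomial.C (w.2 - S.eval 1)) = P
        rw [pmapH_add, pmapH_C, hSd, map_sub, hev, ← h3,
          show P.eval 1 - (P.eval 1 - P.coeff 0) = P.coeff 0 from by abel,
          sub_add_cancel]
      · show pmapH ⇑εA (map_zero εA)
            (Polynomial.derivative (S + Polynomial.C (w.2 - S.eval 1))) +
          pmapH ⇑A.d (map_zero A.d) 0 = Qp
        rw [Polynomial.derivative_add, Polynomial.derivative_C, add_zero, hSder,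
          pmapH_zero, add_zero]
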